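/- Let f ∈ ℚ[X] be a polynomial with f(0) ≠ 0, and let f_rev(X) = X^{deg f} f(1/X) be its reversal. Then Δ(f_rev) = Δ(f). -/

import Mathlib

open Polynomial

/-- The product `∏_{i<j} (α_i - α_j)^2` over a list of complex numbers. -/
noncomputable def pairProd (l : List ℂ) : ℂ :=
  ∏ i : Fin l.length, ∏ j : Fin l.length,
    if (i : ℕ) < (j : ℕ) then (l.get i - l.get j) ^ 2 else 1

/-- The discriminant `Δ(f) = a_n^{2n-2} ∏_{i<j} (α_i - α_j)^2` of a rational
polynomial, where `α_1, …, α_n` are its complex zeros with multiplicity. -/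
noncomputable def polyDisc (f : ℚ[X]) : ℂ :=
  (f.leadingCoeff : ℂ) ^ (2 * (f.natDegree : ℤ) - 2) * pairProd ((f.aroots ℂ).toList)

lemma pairProd_nil : pairProd [] = 1 := by simp [pairProd]

lemma pairProd_cons (a : ℂ) (l : List ℂ) :
    pairProd (a :: l) = (l.map (fun x => (a - x) ^ 2)).prod * pairProd l := by
  have h : pairProd (a :: l) =
      ∏ i : Fin (l.length + 1), ∏ j : Fin (l.length + 1),
        if (i : ℕ) < (j : ℕ) then ((a :: l).get i - (a :: l).get j) ^ 2 else 1 := rfl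
  rw [h, Fin.prod_univ_succ]
  congr 1
  · rw [Fin.prod_univ_succ]
    simp only [Fin.val_zero, Fin.val_succ, Nat.zero_lt_succ, if_true, lt_self_iff_false, if_false,
      one_mul, List.get_cons_succ]
    rw [← List.ofFn_get (l.map (fun x => (a - x) ^ 2)), ← Fin.prod_ofFn]
    simp
  · unfold pairProd
    refine Finset.prod_congr rfl fun i _ => ?_
    rw [Fin.prod_univ_succ]
    simp

lemma pairProd_perm : ∀ {l₁ l₂ : List ℂ}, l₁.Perm l₂ → pairProd l₁ = pairProd l₂ := by
  intro l₁ l₂ h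
  induction h with
  | nil => rfl
  | cons a h ih =>
      rw [pairProd_cons, pairProd_cons, ih, (h.map _).prod_eq]
  | swap a b l =>
      rw [pairProd_cons, pairProd_cons, pairProd_cons, pairProd_cons]
      simp only [List.map_cons, List.prod_cons]
      rw [show (b - a) ^ 2 = (a - b) ^ 2 by ring]
      ring
  | trans _ _ ih1 ih2 => rw [ih1, ih2]

lemma prod_inv_sub_sq (a : ℂ) (ha : a ≠ 0) (t : List ℂ) (h : ∀ x ∈ t, x ≠ 0) :
    (t.map (fun x => (a⁻¹ - x⁻¹) ^ 2)).prod =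
      ((a ^ 2)⁻¹) ^ t.length * ((t.prod ^ 2)⁻¹) * (t.map (fun x => (a - x) ^ 2)).prod := by
  induction t with
  | nil => simp
  | cons b t ih =>
      have hb : b ≠ 0 := h b (List.mem_cons_self)
      have ht : ∀ x ∈ t, x ≠ 0 := fun x hx => h x (List.mem_cons_of_mem b hx)
      have htp : t.prod ≠ 0 := List.prod_ne_zero (fun h0 => (ht 0 h0) rfl)
      simp only [List.map_cons, List.prod_cons, List.length_cons, ih ht]
      have key : (a⁻¹ - b⁻¹) ^ 2 = (a ^ 2)⁻¹ * (b ^ 2)⁻¹ * (a - b) ^ 2 := by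
        field_simp
        ring
      rw [key, pow_succ, mul_pow, mul_inv]
      ring

lemma pairProd_map_inv' (l : List ℂ) (h : ∀ x ∈ l, x ≠ 0) :
    pairProd (l.map (·⁻¹)) * l.prod ^ (2 * l.length) = l.prod ^ 2 * pairProd l := by
  induction l with
  | nil => simp [pairProd_nil]
  | cons a t ih =>
      have ha : a ≠ 0 := h a (List.mem_cons_self)
      have ht : ∀ x ∈ t, x ≠ 0 := fun x hx => h x (List.mem_cons_of_mem a hx)
      have htp : t.prod ≠ 0 := List.prod_ne_zero (fun h0 => (ht 0 h0) rfl)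
      simp only [List.map_cons, pairProd_cons, List.map_map, List.prod_cons, List.length_cons,
        Function.comp_def, prod_inv_sub_sq a ha t ht]
      have ihe := ih ht
      have hA : ((a ^ 2)⁻¹ : ℂ) ^ t.length * a ^ (2 * t.length) = 1 := by
        rw [pow_mul, ← mul_pow, inv_mul_cancel₀ (pow_ne_zero 2 ha), one_pow]
      have hP : ((t.prod ^ 2)⁻¹ : ℂ) * t.prod ^ 2 = 1 := inv_mul_cancel₀ (pow_ne_zero _ htp)
      calc ((a ^ 2)⁻¹ ^ t.length * (t.prod ^ 2)⁻¹ * (t.map (fun x => (a - x) ^ 2)).prod)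
            * pairProd (t.map (·⁻¹)) * (a * t.prod) ^ (2 * (t.length + 1))
          = ((a ^ 2)⁻¹ ^ t.length * a ^ (2 * t.length)) * ((t.prod ^ 2)⁻¹ * t.prod ^ 2)
            * (a ^ 2 * (t.map (fun x => (a - x) ^ 2)).prod)
            * (pairProd (t.map (·⁻¹)) * t.prod ^ (2 * t.length)) := by ring
        _ = (a * t.prod) ^ 2 * ((t.map (fun x => (a - x) ^ 2)).prod * pairProd t) := by
            rw [hA, hP, ihe]; ring

lemma reverse_X_sub_C' (a : ℂ) : (X - C a).reverse = 1 - C a * X := by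
  rw [reverse, natDegree_X_sub_C, sub_eq_add_neg, reflect_add, reflect_neg]
  rw [reflect_C a 1]
  rw [show (X : ℂ[X]) = X ^ 1 by ring, reflect_monomial]
  simp
  ring

lemma one_sub_C_mul_X (a : ℂ) (ha : a ≠ 0) : (1 - C a * X : ℂ[X]) = C (-a) * (X - C a⁻¹) := by
  rw [mul_sub, ← C_mul, neg_mul, mul_inv_cancel₀ ha]
  simp
  ring

lemma reverse_multiset_prod (s : Multiset ℂ) :
    ((s.map (fun a => X - C a)).prod).reverse = (s.map (fun a => (1 : ℂ[X]) - C a * X)).prod := by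
  induction s using Multiset.induction_on with
  | empty => simp [reverse]
  | cons a s ih =>
      simp only [Multiset.map_cons, Multiset.prod_cons]
      rw [reverse_mul_of_domain, ih, reverse_X_sub_C']

lemma roots_reverse (g : ℂ[X]) (h0 : g.coeff 0 ≠ 0) :
    g.reverse.roots = g.roots.map (·⁻¹) := by
  have hg : g ≠ 0 := fun h => h0 (by simp [h])
  have hsp : Splits g := IsAlgClosed.splits g
  have hcard : Multiset.card g.roots = g.natDegree := by
    have := hsp.natDegree_eq_card_roots
    simpa using this.symm
  have hroots0 : ∀ a ∈ g.roots, a ≠ 0 := by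
    intro a ha h
    subst h
    rw [mem_roots hg] at ha
    exact h0 (by rwa [coeff_zero_eq_eval_zero])
  have hfact := C_leadingCoeff_mul_prod_multiset_X_sub_C hcard
  have key : g.reverse = C (g.leadingCoeff * (g.roots.map (fun a => -a)).prod) *
      ((g.roots.map (·⁻¹)).map (fun b => X - C b)).prod := by
    conv_lhs => rw [← hfact]
    rw [reverse_mul_of_domain, reverse_C, reverse_multiset_prod]
    have h1 : (g.roots.map (fun a => (1 : ℂ[X]) - C a * X)) =
        (g.roots.map (fun a => C (-a) * (X - C a⁻¹))) :=
      Multiset.map_congr rfl fun a ha => one_sub_C_mul_X a (hroots0 a ha)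
    rw [h1, Multiset.prod_map_mul, C_mul, mul_assoc]
    congr 1
    rw [Multiset.map_map, show ((fun a : ℂ => C (-a))) = (fun a : ℂ => C a) ∘ (fun a : ℂ => -a)
      from rfl, ← Multiset.map_map, ← map_multiset_prod]
    rfl
  have hc : g.leadingCoeff * (g.roots.map (fun a => -a)).prod ≠ 0 := by
    apply mul_ne_zero (leadingCoeff_ne_zero.mpr hg)
    apply Multiset.prod_ne_zero
    intro h
    obtain ⟨a, ha, ha0⟩ := Multiset.mem_map.mp h
    exact hroots0 a ha (neg_eq_zero.mp ha0)
  rw [key, roots_C_mul _ hc, roots_multiset_prod_X_sub_C]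

/-- The reversal map `f ↦ X^(deg f) f(1/X)` preserves the discriminant of polynomials
with nonzero constant term. -/
theorem disc_reverse_eq (f : ℚ[X]) (h0 : f.eval 0 ≠ 0) :
    polyDisc f.reverse = polyDisc f := by
  have hf : f ≠ 0 := fun h => h0 (by simp [h])
  have hf0 : f.coeff 0 ≠ 0 := by rwa [coeff_zero_eq_eval_zero]
  set φ : ℚ →+* ℂ := algebraMap ℚ ℂ with hφ
  set g : ℂ[X] := f.map φ with hgdef
  have hg : g ≠ 0 := by
    rw [hgdef, Polynomial.map_ne_zero_iff (algebraMap ℚ ℂ).injective]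
    exact hf
  have hg0 : g.coeff 0 ≠ 0 := by
    rw [hgdef, coeff_map]
    exact fun h => hf0 ((_root_.map_eq_zero φ).mp h)
  have hnd : g.natDegree = f.natDegree := natDegree_map φ
  have hsp : Splits g := IsAlgClosed.splits g
  have hcard : Multiset.card g.roots = g.natDegree := by
    have := hsp.natDegree_eq_card_roots
    simpa using this.symm
  have hroots0 : ∀ a ∈ g.roots, a ≠ 0 := by
    intro a ha h
    subst h
    rw [mem_roots hg] at ha
    exact hg0 (by rwa [coeff_zero_eq_eval_zero])
  have hfact := C_leadingCoeff_mul_prod_multiset_X_sub_C hcard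
  -- constant coefficient in terms of roots
  have hc0 : g.coeff 0 = g.leadingCoeff * ((-1 : ℂ) ^ f.natDegree * g.roots.prod) := by
    conv_lhs => rw [coeff_zero_eq_eval_zero, ← hfact]
    rw [eval_mul, eval_C, eval_multiset_prod, Multiset.map_map]
    have : (g.roots.map ((fun p => eval 0 p) ∘ fun a => X - C a)) = g.roots.map (fun a => -a) := by
      apply Multiset.map_congr rfl
      intro a _
      simp
    rw [this, Multiset.prod_map_neg, hcard, hnd]
  -- degrees and leading coefficients of the reverse
  have hnt : f.natTrailingDegree = 0 := natTrailingDegree_eq_zero.mpr (Or.inr hf0)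
  have hrevdeg : f.reverse.natDegree = f.natDegree := by
    rw [reverse_natDegree, hnt, Nat.sub_zero]
  have hrevlead : f.reverse.leadingCoeff = f.coeff 0 := by
    rw [reverse_leadingCoeff, trailingCoeff, hnt]
  have hmaprev : f.reverse.map φ = g.reverse := by
    rw [reverse, reverse, hnd, ← reflect_map]
  have haroots_rev : f.reverse.aroots ℂ = g.roots.map (·⁻¹) := by
    rw [aroots_def, hmaprev, roots_reverse g hg0]
  have haroots : f.aroots ℂ = g.roots := rfl
  -- pass to lists
  set l : List ℂ := g.roots.toList with hldef
  have hlperm : (g.roots.map (·⁻¹)).toList.Perm (l.map (·⁻¹)) := by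
    rw [← Multiset.coe_eq_coe, Multiset.coe_toList, hldef, ← Multiset.map_coe,
      Multiset.coe_toList]
  have hlen : l.length = f.natDegree := by
    rw [hldef, Multiset.length_toList, hcard, hnd]
  have hlprod : l.prod = g.roots.prod := by
    rw [hldef, Multiset.prod_toList]
  have hl0 : ∀ x ∈ l, x ≠ 0 := fun x hx => hroots0 x (by rwa [← Multiset.mem_toList])
  have hlP : l.prod ≠ 0 := List.prod_ne_zero (fun h => (hl0 0 h) rfl)
  have hlist_rev : (f.reverse.aroots ℂ).toList.Perm (l.map (·⁻¹)) := by
    rw [haroots_rev]; exact hlperm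
  -- abbreviations
  set n : ℕ := f.natDegree with hn
  set a : ℂ := g.leadingCoeff with ha
  set P : ℂ := g.roots.prod with hPdef
  set A : ℂ := pairProd l with hA
  have haz : a ≠ 0 := leadingCoeff_ne_zero.mpr hg
  have hPz : P ≠ 0 := by rw [← hlprod]; exact hlP
  have hlead_map : ((f.leadingCoeff : ℚ) : ℂ) = a := by
    rw [ha, hgdef, leadingCoeff_map]
    simp [hφ]
  have hc0_map : ((f.coeff 0 : ℚ) : ℂ) = g.coeff 0 := by
    rw [hgdef, coeff_map]
    simp [hφ]
  -- main identity from pairProd_map_inv'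
  have hkey := pairProd_map_inv' l hl0
  rw [hlprod, hlen, ← hA] at hkey
  -- pairProd (map inv l) = P^2 * A * (P^(2n))⁻¹
  have hM : pairProd (l.map (·⁻¹)) = P ^ 2 * A * (P ^ (2 * n))⁻¹ :=
    (eq_mul_inv_iff_mul_eq₀ (pow_ne_zero _ hPz)).mpr hkey
  -- unfold polyDisc
  rw [polyDisc, polyDisc, hrevdeg, hrevlead, ← hn, pairProd_perm hlist_rev, hM]
  rw [show ((f.aroots ℂ).toList) = l from rfl, ← hA, hc0_map, hlead_map, hc0]
  -- now pure algebra with zpow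
  have hu : ((-1 : ℂ) ^ n) ^ (2 * (n : ℤ) - 2) = 1 := by
    rw [show (2 * (n : ℤ) - 2) = 2 * ((n : ℤ) - 1) by ring, zpow_mul]
    rw [show (((-1 : ℂ) ^ n) ^ (2 : ℤ)) = (((-1 : ℂ) ^ n) ^ (2 : ℕ)) from zpow_natCast _ 2,
      ← pow_mul, mul_comm n 2, pow_mul]
    norm_num
  have hPe : P ^ (2 * (n : ℤ) - 2) * (P ^ 2 * (P ^ (2 * n))⁻¹) = 1 := by
    rw [show (P ^ 2 : ℂ) = P ^ (2 : ℤ) from by exact_mod_cast (zpow_natCast P 2).symm,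
      show (P ^ (2 * n) : ℂ) = P ^ ((2 * n : ℕ) : ℤ) from (zpow_natCast P (2 * n)).symm,
      ← zpow_neg, ← zpow_add₀ hPz, ← zpow_add₀ hPz]
    rw [show (2 * (n : ℤ) - 2 + (2 + -((2 * n : ℕ) : ℤ))) = 0 from by push_cast; ring]
    exact zpow_zero P
  calc (a * ((-1 : ℂ) ^ n * P)) ^ (2 * (n : ℤ) - 2) * (P ^ 2 * A * (P ^ (2 * n))⁻¹)
      = a ^ (2 * (n : ℤ) - 2) * (((-1 : ℂ) ^ n) ^ (2 * (n : ℤ) - 2))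
        * (P ^ (2 * (n : ℤ) - 2) * (P ^ 2 * (P ^ (2 * n))⁻¹)) * A := by
        rw [mul_zpow, mul_zpow]; ring
    _ = a ^ (2 * (n : ℤ) - 2) * A := by rw [hu, hPe]; ring
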